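/- If u satisfies u' = r(u−a)(u−b) and v satisfies v' = r·v·(u − (a+b)/2 + d), then v^(n)(z) = v(z) · (r^n / 2^n) · Σ_{k=0}^{n} C(n,k) (2d)^k Q_{n−k}(u; a, b), where Q_m(u; a, b) = Σ_{k=1}^{m+1} M_{m+1,k} (u−a)^{m+1−k} (u−b)^{k−1}. -/

import Mathlib

open scoped BigOperators
open MeasureTheory

/-- MacMahon numbers `M n k`: `M n 1 = 1`, `M n k = 0` outside `1 ≤ k ≤ n`, and
`M n k = (2k−1) M (n−1) k + (2n−2k+1) M (n−1) (k−1)`. -/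
def macmahon : ℕ → ℕ → ℕ
  | 0, _ => 0
  | 1, 1 => 1
  | 1, _ => 0
  | n + 2, 0 => 0
  | n + 2, k + 1 =>
      (2 * k + 1) * macmahon (n + 1) (k + 1) +
        (2 * (n + 2) - 2 * (k + 1) + 1) * macmahon (n + 1) k

/-- Derivative polynomial `Q_m(u;a,b) = Σ_{k=1}^{m+1} M_{m+1,k} (u-a)^(m+1-k) (u-b)^(k-1)`,
here as a function of the value `u : ℂ`. -/
noncomputable def Q (m : ℕ) (a b u : ℂ) : ℂ :=
  ∑ k ∈ Finset.Icc 1 (m + 1), (macmahon (m + 1) k : ℂ) * (u - a) ^ (m + 1 - k) * (u - b) ^ (k - 1)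

lemma macmahon_rec (n k : ℕ) : macmahon (n + 2) (k + 1) =
    (2 * k + 1) * macmahon (n + 1) (k + 1) +
      (2 * (n + 2) - 2 * (k + 1) + 1) * macmahon (n + 1) k := rfl

lemma macmahon_zero_right (n : ℕ) : macmahon n 0 = 0 := by
  rcases n with _ | _ | n <;> rfl

lemma macmahon_eq_zero : ∀ n k : ℕ, n < k → macmahon n k = 0 := by
  intro n
  induction n with
  | zero => intro k _; rfl
  | succ m ih =>
    intro k hk
    rcases m with _ | m
    · rcases k with _ | _ | k
      · omega
      · omega
      · rfl
    · rcases k with _ | k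
      · omega
      · rw [macmahon_rec, ih (k + 1) (by omega), ih k (by omega)]
        ring

/-- `Q` reindexed over `range`. -/
noncomputable def Qr (m : ℕ) (x y : ℂ) : ℂ :=
  ∑ k ∈ Finset.range (m + 1), (macmahon (m + 1) (k + 1) : ℂ) * x ^ (m - k) * y ^ k

/-- Formal derivative of `Qr` in `u` when `x = u - a`, `y = u - b`. -/
noncomputable def Qd (m : ℕ) (x y : ℂ) : ℂ :=
  ∑ k ∈ Finset.range (m + 1), (macmahon (m + 1) (k + 1) : ℂ) *
    (((m - k : ℕ) : ℂ) * x ^ (m - k - 1) * y ^ k + (k : ℂ) * x ^ (m - k) * y ^ (k - 1))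

lemma cast_pow_pred_mul (p : ℕ) (x : ℂ) : (p : ℂ) * x ^ (p - 1) * x = (p : ℂ) * x ^ p := by
  rcases p with _ | p
  · simp
  · simp [pow_succ]; ring

lemma Q_eq_Qr (m : ℕ) (a b u : ℂ) : Q m a b u = Qr m (u - a) (u - b) := by
  have hset : Finset.Icc 1 (m + 1) =
      Finset.map ⟨fun k => k + 1, add_left_injective 1⟩ (Finset.range (m + 1)) := by
    ext j
    simp only [Finset.mem_Icc, Finset.mem_map, Finset.mem_range, Function.Embedding.coeFn_mk]
    constructor
    · rintro ⟨h1, h2⟩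
      exact ⟨j - 1, by omega, by omega⟩
    · rintro ⟨k, hk, rfl⟩
      omega
  rw [Q, hset, Finset.sum_map, Qr]
  refine Finset.sum_congr rfl fun k _ => ?_
  simp only [Function.Embedding.coeFn_mk]
  have h2 : m + 1 - (k + 1) = m - k := by omega
  have h3 : k + 1 - 1 = k := by omega
  rw [h2, h3]

lemma Qr_rec (m : ℕ) (x y : ℂ) :
    Qr (m + 1) x y = (x + y) * Qr m x y + 2 * x * y * Qd m x y := by
  have hA : (∑ k ∈ Finset.range (m + 2),
        ((2 * k + 1 : ℕ) : ℂ) * (macmahon (m + 1) (k + 1) : ℂ) * x ^ (m + 1 - k) * y ^ k) =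
      ∑ k ∈ Finset.range (m + 1),
        ((2 * k + 1 : ℕ) : ℂ) * (macmahon (m + 1) (k + 1) : ℂ) * x ^ (m + 1 - k) * y ^ k := by
    rw [Finset.sum_range_succ, macmahon_eq_zero (m + 1) (m + 2) (by omega)]
    simp
  have hB : (∑ k ∈ Finset.range (m + 2),
        ((2 * (m + 2) - 2 * (k + 1) + 1 : ℕ) : ℂ) * (macmahon (m + 1) k : ℂ)
          * x ^ (m + 1 - k) * y ^ k) =
      ∑ k ∈ Finset.range (m + 1),
        ((2 * (m + 2) - 2 * (k + 2) + 1 : ℕ) : ℂ) * (macmahon (m + 1) (k + 1) : ℂ)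
          * x ^ (m - k) * y ^ (k + 1) := by
    rw [Finset.sum_range_succ', macmahon_zero_right]
    simp only [Nat.cast_zero, mul_zero, zero_mul, add_zero]
    refine Finset.sum_congr rfl fun k hk => ?_
    have : m + 1 - (k + 1) = m - k := by omega
    rw [this]
  have hL : Qr (m + 1) x y =
      (∑ k ∈ Finset.range (m + 2),
        ((2 * k + 1 : ℕ) : ℂ) * (macmahon (m + 1) (k + 1) : ℂ) * x ^ (m + 1 - k) * y ^ k) +
      ∑ k ∈ Finset.range (m + 2),
        ((2 * (m + 2) - 2 * (k + 1) + 1 : ℕ) : ℂ) * (macmahon (m + 1) k : ℂ)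
          * x ^ (m + 1 - k) * y ^ k := by
    rw [Qr, ← Finset.sum_add_distrib]
    refine Finset.sum_congr rfl fun k _ => ?_
    rw [macmahon_rec]
    push_cast
    ring
  rw [hL, hA, hB, Qd, Qr, Finset.mul_sum, Finset.mul_sum, ← Finset.sum_add_distrib,
    ← Finset.sum_add_distrib]
  refine Finset.sum_congr rfl fun k hk => ?_
  have hk' : k ≤ m := by simpa [Nat.lt_succ_iff] using hk
  have h1 : m + 1 - k = (m - k) + 1 := by omega
  have h2 : (2 * (m + 2) - 2 * (k + 2) + 1 : ℕ) = 2 * (m - k) + 1 := by omega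
  rw [h1, h2, pow_succ]
  have e1 := cast_pow_pred_mul (m - k) x
  have e2 := cast_pow_pred_mul k y
  push_cast
  linear_combination (-2 * (macmahon (m + 1) (k + 1) : ℂ) * y ^ (k + 1)) * e1 +
    (-2 * (macmahon (m + 1) (k + 1) : ℂ) * x ^ (m - k) * x) * e2

/-- The full coefficient polynomial (as a function of `x = u-a`, `y = u-b`). -/
noncomputable def Sc (n : ℕ) (d x y : ℂ) : ℂ :=
  ∑ k ∈ Finset.range (n + 1), (n.choose k : ℂ) * (2 * d) ^ k * Qr (n - k) x y

/-- Its formal `u`-derivative. -/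
noncomputable def Sd (n : ℕ) (d x y : ℂ) : ℂ :=
  ∑ k ∈ Finset.range (n + 1), (n.choose k : ℂ) * (2 * d) ^ k * Qd (n - k) x y

lemma Sc_rec (n : ℕ) (d x y : ℂ) :
    Sc (n + 1) d x y = (x + y + 2 * d) * Sc n d x y + 2 * x * y * Sd n d x y := by
  have hL : Sc (n + 1) d x y = Qr (n + 1) x y +
      ∑ k ∈ Finset.range (n + 1),
        ((n.choose k : ℂ) + (n.choose (k + 1) : ℂ)) * (2 * d) ^ (k + 1) * Qr (n - k) x y := by
    rw [Sc, Finset.sum_range_succ']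
    simp only [Nat.choose_zero_right, pow_zero, Nat.cast_one, one_mul, Nat.sub_zero]
    rw [add_comm]
    congr 1
    refine Finset.sum_congr rfl fun k hk => ?_
    have h1 : n + 1 - (k + 1) = n - k := by omega
    rw [h1, Nat.choose_succ_succ]
    push_cast
    ring
  have hT : (x + y) * Sc n d x y + 2 * x * y * Sd n d x y =
      ∑ k ∈ Finset.range (n + 1), (n.choose k : ℂ) * (2 * d) ^ k * Qr (n - k + 1) x y := by
    rw [Sc, Sd, Finset.mul_sum, Finset.mul_sum, ← Finset.sum_add_distrib]
    refine Finset.sum_congr rfl fun k _ => ?_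
    rw [Qr_rec (n - k) x y]
    ring
  have hT2 : (∑ k ∈ Finset.range (n + 1), (n.choose k : ℂ) * (2 * d) ^ k * Qr (n - k + 1) x y) =
      Qr (n + 1) x y +
      ∑ k ∈ Finset.range (n + 1), (n.choose (k + 1) : ℂ) * (2 * d) ^ (k + 1) * Qr (n - k) x y := by
    rw [Finset.sum_range_succ']
    simp only [Nat.choose_zero_right, pow_zero, Nat.cast_one, one_mul, Nat.sub_zero]
    rw [add_comm]
    congr 1
    rw [Finset.sum_range_succ, Nat.choose_succ_self]
    simp only [Nat.cast_zero, zero_mul, add_zero]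
    refine Finset.sum_congr rfl fun k hk => ?_
    have h1 : n - (k + 1) + 1 = n - k := by
      have : k < n := Finset.mem_range.1 hk
      omega
    rw [h1]
  have hR : (x + y + 2 * d) * Sc n d x y + 2 * x * y * Sd n d x y =
      ((x + y) * Sc n d x y + 2 * x * y * Sd n d x y) + 2 * d * Sc n d x y := by ring
  rw [hR, hT, hT2, hL, Sc, Finset.mul_sum, add_assoc]
  congr 1
  rw [← Finset.sum_add_distrib]
  refine Finset.sum_congr rfl fun k _ => ?_
  ring

lemma hasDerivAt_Qr_comp (m : ℕ) (a b : ℂ) (u : ℂ → ℂ) : ∀ w : ℂ,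
    HasDerivAt (fun t => Qr m (t - a) (t - b)) (Qd m (w - a) (w - b)) w := by
  intro w
  have hfun : (fun t => Qr m (t - a) (t - b)) = fun t =>
      ∑ k ∈ Finset.range (m + 1),
        (macmahon (m + 1) (k + 1) : ℂ) * ((t - a) ^ (m - k) * (t - b) ^ k) := by
    funext t; rw [Qr]; exact Finset.sum_congr rfl fun k _ => by ring
  rw [hfun, Qd]
  apply HasDerivAt.fun_sum
  intro k _
  have h1 : HasDerivAt (fun t : ℂ => (t - a) ^ (m - k))
      (((m - k : ℕ) : ℂ) * (w - a) ^ (m - k - 1)) w := by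
    have := ((hasDerivAt_id w).sub_const a).fun_pow (m - k)
    simpa using this
  have h2 : HasDerivAt (fun t : ℂ => (t - b) ^ k) ((k : ℂ) * (w - b) ^ (k - 1)) w := by
    have := ((hasDerivAt_id w).sub_const b).fun_pow k
    simpa using this
  have := (h1.fun_mul h2).const_mul ((macmahon (m + 1) (k + 1) : ℂ))
  exact this.congr_deriv (by ring)

lemma hasDerivAt_Sc_comp (n : ℕ) (d a b : ℂ) (w : ℂ) :
    HasDerivAt (fun t => Sc n d (t - a) (t - b)) (Sd n d (w - a) (w - b)) w := by
  have hfun : (fun t => Sc n d (t - a) (t - b)) = fun t =>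
      ∑ k ∈ Finset.range (n + 1),
        (n.choose k : ℂ) * (2 * d) ^ k * Qr (n - k) (t - a) (t - b) := by
    funext t; rw [Sc]
  rw [hfun, Sd]
  apply HasDerivAt.fun_sum
  intro k _
  exact (hasDerivAt_Qr_comp (n - k) a b (fun t => t) w).const_mul _

theorem riccati_v_shifted_iterated_deriv
    (D : Set ℂ) (hD : IsOpen D) (r a b d : ℂ) (hr : r ≠ 0) (hab : a ≠ b)
    (u v : ℂ → ℂ)
    (hu : ∀ z ∈ D, HasDerivAt u (r * (u z - a) * (u z - b)) z)
    (hv : ∀ z ∈ D, HasDerivAt v (r * v z * (u z - (a + b) / 2 + d)) z)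
    (n : ℕ) (z : ℂ) (hz : z ∈ D) :
    iteratedDerivWithin n v D z =
      v z * (r ^ n / 2 ^ n) * ∑ k ∈ Finset.range (n + 1),
        (n.choose k : ℂ) * (2 * d) ^ k * Q (n - k) a b (u z) := by
  have main : ∀ z ∈ D, iteratedDerivWithin n v D z =
      v z * (r ^ n / 2 ^ n) * Sc n d (u z - a) (u z - b) := by
    induction n with
    | zero =>
      intro z hz
      have : Sc 0 d (u z - a) (u z - b) = 1 := by
        rw [Sc]
        simp [Qr, show macmahon 1 1 = 1 from rfl]
      rw [this]
      simp
    | succ m ih =>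
      intro z hz
      have hEq : Set.EqOn (iteratedDerivWithin m v D)
          (fun t => v t * (r ^ m / 2 ^ m) * Sc m d (u t - a) (u t - b)) D := fun t ht => ih t ht
      rw [iteratedDerivWithin_succ,
        derivWithin_congr hEq (ih z hz), derivWithin_of_isOpen hD hz]
      have hcomp : HasDerivAt (fun t => Sc m d (u t - a) (u t - b))
          (Sd m d (u z - a) (u z - b) * (r * (u z - a) * (u z - b))) z :=
        (hasDerivAt_Sc_comp m d a b (u z)).comp z (hu z hz)
      have hF : HasDerivAt (fun t => v t * (r ^ m / 2 ^ m) * Sc m d (u t - a) (u t - b))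
          ((r * v z * (u z - (a + b) / 2 + d) * (r ^ m / 2 ^ m)) * Sc m d (u z - a) (u z - b)
            + (v z * (r ^ m / 2 ^ m)) *
              (Sd m d (u z - a) (u z - b) * (r * (u z - a) * (u z - b)))) z :=
        ((hv z hz).mul_const (r ^ m / 2 ^ m)).mul hcomp
      rw [hF.deriv, Sc_rec]
      ring
  rw [main z hz]
  congr 1
  rw [Sc]
  exact Finset.sum_congr rfl fun k _ => by rw [Q_eq_Qr]
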